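/- Let θ ≥ 0, let A, B ∈ ℝ^{n×n}, and let ε_{klk'l'r} ∈ ℝ, for (k,l,k',l',r) ∈ {1,…,n}^4 × {1,…,R}, satisfy |ε_{klk'l'r}| ≤ θ. Define the error matrix E ∈ ℝ^{n×n} by E_{ij} = Σ_{k,l=1}^n Σ_{k',l'=1}^n a_{kl} b_{k'l'} Σ_{r=1}^R u_{klr} v_{k'l'r} w_{ijr} ε_{klk'l'r}. Then ‖E‖ ≤ θ · √R · ‖A‖ · ‖B‖ · √(Σ_{r=1}^R ‖U_{::r}‖² ‖V_{::r}‖² ‖W_{::r}‖²), where U_{::r} ∈ ℝ^{n×n} is the r-th frontal slice of U (so ‖U_{::r}‖² = Σ_{k,l} u_{klr}²), and similarly for V_{::r} and W_{::r}. -/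
import Mathlib


open scoped BigOperators Matrix

/-- Frobenius norm of a real matrix. -/
noncomputable def frob {ι κ : Type*} [Fintype ι] [Fintype κ] (A : Matrix ι κ ℝ) : ℝ :=
  Real.sqrt (∑ i, ∑ j, (A i j) ^ 2)

/-- Frobenius norm of a 6-mode tensor. -/
noncomputable def frob6 {n : ℕ} (T : Fin n → Fin n → Fin n → Fin n → Fin n → Fin n → ℝ) : ℝ :=
  Real.sqrt (∑ k, ∑ l, ∑ k', ∑ l', ∑ i, ∑ j, (T k l k' l' i j) ^ 2)

/-- The 6-mode tensor Y with entries y_{klk'l'ij} = Σ_r u_{klr} v_{k'l'r} w_{ijr}. -/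
noncomputable def Ytens {n R : ℕ} (U V W : Fin n → Fin n → Fin R → ℝ) :
    Fin n → Fin n → Fin n → Fin n → Fin n → Fin n → ℝ :=
  fun k l k' l' i j => ∑ r, U k l r * V k' l' r * W i j r

/-- The exact matrix-multiplication tensor X, x_{klk'l'ij} = δ_{ki} δ_{l'j} δ_{lk'}. -/
def Xtens (n : ℕ) : Fin n → Fin n → Fin n → Fin n → Fin n → Fin n → ℝ :=
  fun k l k' l' i j =>
    (if k = i then (1 : ℝ) else 0) * (if l' = j then (1 : ℝ) else 0) *
      (if l = k' then (1 : ℝ) else 0)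

/-- The block bilinear computation f on (mn)×(mn) matrices indexed by Fin n × Fin m
(first index: block position, second index: position within the m×m block). -/
noncomputable def blinf {n R m : ℕ} (U V W : Fin n → Fin n → Fin R → ℝ)
    (A B : Matrix (Fin n × Fin m) (Fin n × Fin m) ℝ) :
    Matrix (Fin n × Fin m) (Fin n × Fin m) ℝ :=
  fun p q => ∑ r, W p.1 q.1 r *
    ∑ z, (∑ k, ∑ l, U k l r * A (k, p.2) (l, z)) *
         (∑ k', ∑ l', V k' l' r * B (k', z) (l', q.2))

/-- κ = n⁻³ Σ_{i,j,l} (1 − Σ_r u_{ilr} v_{ljr} w_{ijr}). -/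
noncomputable def kappa {n R : ℕ} (U V W : Fin n → Fin n → Fin R → ℝ) : ℝ :=
  ((n : ℝ) ^ 3)⁻¹ * ∑ i, ∑ j, ∑ l, (1 - ∑ r, U i l r * V l j r * W i j r)

/-- M = P S : block matrix with m×m block s(j)·I_m at block position (π(j), j). -/
def Mmat {n : ℕ} (m : ℕ) (s : Fin n → ℝ) (π : Equiv.Perm (Fin n)) :
    Matrix (Fin n × Fin m) (Fin n × Fin m) ℝ :=
  fun p q => if p.1 = π q.1 ∧ p.2 = q.2 then s q.1 else 0

/-- The randomized bilinear computation f̂(A,B) = (1−κ)⁻¹ M₁ᵀ f(M₁AM₂ᵀ, M₂BM₃ᵀ) M₃. -/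
noncomputable def fhat {n R : ℕ} (m : ℕ) (U V W : Fin n → Fin n → Fin R → ℝ)
    (s₁ s₂ s₃ : Fin n → ℝ) (π₁ π₂ π₃ : Equiv.Perm (Fin n))
    (A B : Matrix (Fin n × Fin m) (Fin n × Fin m) ℝ) :
    Matrix (Fin n × Fin m) (Fin n × Fin m) ℝ :=
  (1 - kappa U V W)⁻¹ •
    ((Mmat m s₁ π₁)ᵀ *
      blinf U V W (Mmat m s₁ π₁ * A * (Mmat m s₂ π₂)ᵀ) (Mmat m s₂ π₂ * B * (Mmat m s₃ π₃)ᵀ) *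
      Mmat m s₃ π₃)


private lemma swap5 {α β γ δ ρ : Type*} [Fintype α] [Fintype β] [Fintype γ] [Fintype δ]
    [Fintype ρ] (f : α → β → γ → δ → ρ → ℝ) :
    (∑ k, ∑ l, ∑ k', ∑ l', ∑ r, f k l k' l' r)
      = ∑ r, ∑ k, ∑ l, ∑ k', ∑ l', f k l k' l' r := by
  calc (∑ k, ∑ l, ∑ k', ∑ l', ∑ r, f k l k' l' r)
      = ∑ k, ∑ l, ∑ k', ∑ r, ∑ l', f k l k' l' r :=
        Finset.sum_congr rfl fun k _ => Finset.sum_congr rfl fun l _ =>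
          Finset.sum_congr rfl fun k' _ => Finset.sum_comm
    _ = ∑ k, ∑ l, ∑ r, ∑ k', ∑ l', f k l k' l' r :=
        Finset.sum_congr rfl fun k _ => Finset.sum_congr rfl fun l _ =>
          Finset.sum_comm
    _ = ∑ k, ∑ r, ∑ l, ∑ k', ∑ l', f k l k' l' r :=
        Finset.sum_congr rfl fun k _ => Finset.sum_comm
    _ = ∑ r, ∑ k, ∑ l, ∑ k', ∑ l', f k l k' l' r := Finset.sum_comm

private lemma cs2' {n : ℕ} (f g : Fin n → Fin n → ℝ) :
    (∑ k, ∑ l, |f k l| * |g k l|) ≤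
      Real.sqrt (∑ k, ∑ l, (f k l) ^ 2) * Real.sqrt (∑ k, ∑ l, (g k l) ^ 2) := by
  have h := Finset.sum_mul_sq_le_sq_mul_sq Finset.univ
    (fun p : Fin n × Fin n => |f p.1 p.2|) (fun p : Fin n × Fin n => |g p.1 p.2|)
  simp only [sq_abs] at h
  have e1 : (∑ k, ∑ l, |f k l| * |g k l|)
      = ∑ p : Fin n × Fin n, |f p.1 p.2| * |g p.1 p.2| := (Fintype.sum_prod_type' _).symm
  have e2 : (∑ k, ∑ l, (f k l) ^ 2) = ∑ p : Fin n × Fin n, f p.1 p.2 ^ 2 :=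
    (Fintype.sum_prod_type' _).symm
  have e3 : (∑ k, ∑ l, (g k l) ^ 2) = ∑ p : Fin n × Fin n, g p.1 p.2 ^ 2 :=
    (Fintype.sum_prod_type' _).symm
  rw [e1, e2, e3, ← Real.sqrt_mul (by positivity)]
  exact (Real.le_sqrt (by positivity) (by positivity)).mpr h

private lemma prod_sum2 {n : ℕ} (X Y : Fin n → Fin n → ℝ) :
    (∑ k, ∑ l, ∑ k', ∑ l', X k l * Y k' l')
      = (∑ k, ∑ l, X k l) * (∑ k', ∑ l', Y k' l') := by
  simp_rw [← Finset.mul_sum, ← Finset.sum_mul]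

private lemma sq_sum_le {R : ℕ} (x : Fin R → ℝ) :
    (∑ r, x r) ^ 2 ≤ (R : ℝ) * ∑ r, (x r) ^ 2 := by
  have h := Finset.sum_mul_sq_le_sq_mul_sq Finset.univ (fun _ : Fin R => (1 : ℝ)) x
  simpa using h

theorem stmt15 (n R : ℕ) (hn : 0 < n) (hR : 0 < R)
    (U V W : Fin n → Fin n → Fin R → ℝ)
    (θ : ℝ) (hθ : 0 ≤ θ)
    (A B : Matrix (Fin n) (Fin n) ℝ)
    (ε : Fin n → Fin n → Fin n → Fin n → Fin R → ℝ)
    (hε : ∀ k l k' l' r, |ε k l k' l' r| ≤ θ)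
    (E : Matrix (Fin n) (Fin n) ℝ)
    (hE : ∀ i j, E i j = ∑ k, ∑ l, ∑ k', ∑ l',
      A k l * B k' l' * ∑ r, U k l r * V k' l' r * W i j r * ε k l k' l' r) :
    frob E ≤ θ * Real.sqrt R * frob A * frob B *
      Real.sqrt (∑ r, (∑ k, ∑ l, (U k l r) ^ 2) * (∑ k, ∑ l, (V k l r) ^ 2) *
        (∑ k, ∑ l, (W k l r) ^ 2)) := by
  classical
  have hfA : (0:ℝ) ≤ frob A := Real.sqrt_nonneg _
  have hfB : (0:ℝ) ≤ frob B := Real.sqrt_nonneg _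
  set sU : Fin R → ℝ := fun r => ∑ k, ∑ l, (U k l r) ^ 2 with hsU
  set sV : Fin R → ℝ := fun r => ∑ k, ∑ l, (V k l r) ^ 2 with hsV
  set sW : Fin R → ℝ := fun r => ∑ k, ∑ l, (W k l r) ^ 2 with hsW
  have hsUnn : ∀ r, 0 ≤ sU r := fun r => by rw [hsU]; positivity
  have hsVnn : ∀ r, 0 ≤ sV r := fun r => by rw [hsV]; positivity
  -- pointwise bound
  have key : ∀ i j, |E i j| ≤ θ * frob A * frob B *
      ∑ r, Real.sqrt (sU r) * Real.sqrt (sV r) * |W i j r| := by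
    intro i j
    have h1 : |E i j| ≤ ∑ k, ∑ l, ∑ k', ∑ l',
        |A k l| * |B k' l'| * ∑ r, |U k l r| * |V k' l' r| * |W i j r| * θ := by
      rw [hE i j]
      refine (Finset.abs_sum_le_sum_abs _ _).trans (Finset.sum_le_sum fun k _ => ?_)
      refine (Finset.abs_sum_le_sum_abs _ _).trans (Finset.sum_le_sum fun l _ => ?_)
      refine (Finset.abs_sum_le_sum_abs _ _).trans (Finset.sum_le_sum fun k' _ => ?_)
      refine (Finset.abs_sum_le_sum_abs _ _).trans (Finset.sum_le_sum fun l' _ => ?_)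
      rw [abs_mul, abs_mul]
      refine mul_le_mul_of_nonneg_left ?_ (by positivity)
      refine (Finset.abs_sum_le_sum_abs _ _).trans (Finset.sum_le_sum fun r _ => ?_)
      rw [abs_mul, abs_mul, abs_mul]
      exact mul_le_mul_of_nonneg_left (hε k l k' l' r) (by positivity)
    have h2 : (∑ k, ∑ l, ∑ k', ∑ l',
        |A k l| * |B k' l'| * ∑ r, |U k l r| * |V k' l' r| * |W i j r| * θ)
        = ∑ r, θ * ((∑ k, ∑ l, |A k l| * |U k l r|) *
            (∑ k', ∑ l', |B k' l'| * |V k' l' r|) * |W i j r|) := by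
      rw [show (∑ k, ∑ l, ∑ k', ∑ l',
          |A k l| * |B k' l'| * ∑ r, |U k l r| * |V k' l' r| * |W i j r| * θ)
          = ∑ k, ∑ l, ∑ k', ∑ l', ∑ r,
            |A k l| * |B k' l'| * (|U k l r| * |V k' l' r| * |W i j r| * θ) from by
        refine Finset.sum_congr rfl fun k _ => Finset.sum_congr rfl fun l _ =>
          Finset.sum_congr rfl fun k' _ => Finset.sum_congr rfl fun l' _ => ?_
        rw [Finset.mul_sum]]
      rw [swap5]
      refine Finset.sum_congr rfl fun r _ => ?_
      calc (∑ k, ∑ l, ∑ k', ∑ l',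
            |A k l| * |B k' l'| * (|U k l r| * |V k' l' r| * |W i j r| * θ))
          = ∑ k, ∑ l, ∑ k', ∑ l',
            (|A k l| * |U k l r|) * ((|B k' l'| * |V k' l' r|) * (|W i j r| * θ)) := by
            refine Finset.sum_congr rfl fun k _ => Finset.sum_congr rfl fun l _ =>
              Finset.sum_congr rfl fun k' _ => Finset.sum_congr rfl fun l' _ => by ring
        _ = (∑ k, ∑ l, |A k l| * |U k l r|) *
            (∑ k', ∑ l', (|B k' l'| * |V k' l' r|) * (|W i j r| * θ)) := prod_sum2 _ _
        _ = (∑ k, ∑ l, |A k l| * |U k l r|) *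
            ((∑ k', ∑ l', |B k' l'| * |V k' l' r|) * (|W i j r| * θ)) := by
            simp_rw [← Finset.sum_mul]
        _ = θ * ((∑ k, ∑ l, |A k l| * |U k l r|) *
            (∑ k', ∑ l', |B k' l'| * |V k' l' r|) * |W i j r|) := by ring
    have h3 : (∑ r, θ * ((∑ k, ∑ l, |A k l| * |U k l r|) *
            (∑ k', ∑ l', |B k' l'| * |V k' l' r|) * |W i j r|))
        ≤ ∑ r, θ * ((frob A * Real.sqrt (sU r)) * (frob B * Real.sqrt (sV r)) * |W i j r|) := by
      refine Finset.sum_le_sum fun r _ => ?_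
      have c1 : (∑ k, ∑ l, |A k l| * |U k l r|) ≤ frob A * Real.sqrt (sU r) := by
        have := cs2' (fun k l => A k l) (fun k l => U k l r)
        simpa [frob, hsU] using this
      have c2 : (∑ k', ∑ l', |B k' l'| * |V k' l' r|) ≤ frob B * Real.sqrt (sV r) := by
        have := cs2' (fun k l => B k l) (fun k l => V k l r)
        simpa [frob, hsV] using this
      have hn1 : (0:ℝ) ≤ ∑ k, ∑ l, |A k l| * |U k l r| := by positivity
      have hn2 : (0:ℝ) ≤ ∑ k', ∑ l', |B k' l'| * |V k' l' r| := by positivity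
      gcongr
    calc |E i j| ≤ _ := h1
      _ = _ := h2
      _ ≤ _ := h3
      _ = θ * frob A * frob B * ∑ r, Real.sqrt (sU r) * Real.sqrt (sV r) * |W i j r| := by
        rw [Finset.mul_sum]
        refine Finset.sum_congr rfl fun r _ => by ring
  -- squared bound summed
  have sum_sq : (∑ i, ∑ j, (E i j) ^ 2) ≤
      (θ * frob A * frob B) ^ 2 * ((R : ℝ) * ∑ r, sU r * sV r * sW r) := by
    have step1 : ∀ i j, (E i j) ^ 2 ≤
        (θ * frob A * frob B) ^ 2 * ((R : ℝ) * ∑ r, sU r * sV r * (W i j r) ^ 2) := by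
      intro i j
      have h0 : (E i j) ^ 2 ≤ (θ * frob A * frob B *
          ∑ r, Real.sqrt (sU r) * Real.sqrt (sV r) * |W i j r|) ^ 2 := by
        rw [← sq_abs (E i j)]
        exact pow_le_pow_left₀ (abs_nonneg _) (key i j) 2
      refine h0.trans ?_
      rw [mul_pow]
      refine mul_le_mul_of_nonneg_left ?_ (sq_nonneg _)
      have := sq_sum_le (fun r => Real.sqrt (sU r) * Real.sqrt (sV r) * |W i j r|)
      refine this.trans (le_of_eq ?_)
      congr 1
      refine Finset.sum_congr rfl fun r _ => ?_
      rw [mul_pow, mul_pow, sq_abs, Real.sq_sqrt (hsUnn r), Real.sq_sqrt (hsVnn r)]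
    calc (∑ i, ∑ j, (E i j) ^ 2)
        ≤ ∑ i, ∑ j, (θ * frob A * frob B) ^ 2 * ((R : ℝ) * ∑ r, sU r * sV r * (W i j r) ^ 2) :=
          Finset.sum_le_sum fun i _ => Finset.sum_le_sum fun j _ => step1 i j
      _ = (θ * frob A * frob B) ^ 2 * ((R : ℝ) * ∑ i, ∑ j, ∑ r, sU r * sV r * (W i j r) ^ 2) := by
          simp_rw [← Finset.mul_sum]
      _ = (θ * frob A * frob B) ^ 2 * ((R : ℝ) * ∑ r, sU r * sV r * sW r) := by
          congr 2
          calc (∑ i, ∑ j, ∑ r, sU r * sV r * (W i j r) ^ 2)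
              = ∑ i, ∑ r, ∑ j, sU r * sV r * (W i j r) ^ 2 :=
                Finset.sum_congr rfl fun i _ => Finset.sum_comm
            _ = ∑ r, ∑ i, ∑ j, sU r * sV r * (W i j r) ^ 2 := Finset.sum_comm
            _ = ∑ r, sU r * sV r * sW r := by
                refine Finset.sum_congr rfl fun r _ => ?_
                rw [hsW]
                simp_rw [← Finset.mul_sum]
  -- conclude
  have hfE : frob E ≤ Real.sqrt ((θ * frob A * frob B) ^ 2 *
      ((R : ℝ) * ∑ r, sU r * sV r * sW r)) := by
    rw [frob]
    exact Real.sqrt_le_sqrt sum_sq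
  refine hfE.trans (le_of_eq ?_)
  rw [Real.sqrt_mul (by positivity), Real.sqrt_sq (by positivity),
    Real.sqrt_mul (by positivity)]
  ring
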